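/- For a strictly monotone linear dilation d, the canonical homogeneous norm and the weighted Euclidean norm are related by: ‖x‖_d^{η̲} ≤ ‖x‖ ≤ ‖x‖_d^{η̄} when ‖x‖ ≥ 1, and ‖x‖_d^{η̄} ≤ ‖x‖ ≤ ‖x‖_d^{η̲} when ‖x‖ ≤ 1. -/

import Mathlib

open Matrix NormedSpace Pointwise

noncomputable def dil {n : ℕ} (G : Matrix (Fin n) (Fin n) ℝ) (s : ℝ) :
    Matrix (Fin n) (Fin n) ℝ :=
  NormedSpace.exp (s • G)

section

open scoped ComplexOrder

/-- The positive semidefinite square root, as `Matrix.PosSemidef.sqrt` was defined in Mathlib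
of December 2024 (since removed). -/
noncomputable def Matrix.PosSemidef.sqrt {m : Type*} [Fintype m] [DecidableEq m] {𝕜 : Type*}
    [RCLike 𝕜] {A : Matrix m m 𝕜} (hA : A.PosSemidef) : Matrix m m 𝕜 :=
  hA.isHermitian.eigenvectorUnitary.1 * diagonal ((↑) ∘ Real.sqrt ∘ hA.isHermitian.eigenvalues) *
    (star hA.isHermitian.eigenvectorUnitary : Matrix m m 𝕜)

end

noncomputable def wnorm {n : ℕ} (P : Matrix (Fin n) (Fin n) ℝ) (x : Fin n → ℝ) : ℝ :=
  Real.sqrt (x ⬝ᵥ P.mulVec x)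

section Aux

variable {n : ℕ}

lemma psd_sqrt_mul_self' {A : Matrix (Fin n) (Fin n) ℝ} (hA : A.PosSemidef) :
    hA.sqrt * hA.sqrt = A := by
  set U := hA.isHermitian.eigenvectorUnitary with hUdef
  have hU : (star U : Matrix (Fin n) (Fin n) ℝ) * U = 1 := Unitary.coe_star_mul_self U
  have hD : diagonal ((RCLike.ofReal : ℝ → ℝ) ∘ Real.sqrt ∘ hA.isHermitian.eigenvalues) *
      diagonal ((RCLike.ofReal : ℝ → ℝ) ∘ Real.sqrt ∘ hA.isHermitian.eigenvalues) =
      diagonal (RCLike.ofReal ∘ hA.isHermitian.eigenvalues : Fin n → ℝ) := by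
    rw [diagonal_mul_diagonal]; congr 1; funext i
    simp [Real.mul_self_sqrt (hA.eigenvalues_nonneg i)]
  conv_rhs => rw [hA.isHermitian.spectral_theorem, Unitary.conjStarAlgAut_apply]
  simp only [Matrix.PosSemidef.sqrt]
  rw [← hD]
  simp only [mul_assoc]
  rw [← mul_assoc (star U : Matrix (Fin n) (Fin n) ℝ) (U : Matrix (Fin n) (Fin n) ℝ), hU, one_mul]

lemma psd_sqrt_isHermitian' {A : Matrix (Fin n) (Fin n) ℝ} (hA : A.PosSemidef) :
    hA.sqrt.IsHermitian := by
  unfold Matrix.IsHermitian Matrix.PosSemidef.sqrt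
  rw [conjTranspose_mul, conjTranspose_mul, diagonal_conjTranspose, ← star_eq_conjTranspose,
    ← star_eq_conjTranspose, star_star]
  simp [mul_assoc, star_trivial]

/-- Quadratic form upper bound from an upper bound on the spectrum of a Hermitian matrix. -/
lemma quad_le_of_spectrum (S : Matrix (Fin n) (Fin n) ℝ) (hS : S.IsHermitian) (c : ℝ)
    (hc : ∀ μ ∈ spectrum ℝ S, μ ≤ c) (w : Fin n → ℝ) :
    w ⬝ᵥ S *ᵥ w ≤ c * (w ⬝ᵥ w) := by
  set T : Matrix (Fin n) (Fin n) ℝ := c • (1 : Matrix (Fin n) (Fin n) ℝ) - S with hTdef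
  have hT : T.IsHermitian := by
    rw [Matrix.IsHermitian, hTdef, Matrix.conjTranspose_sub, Matrix.conjTranspose_smul, hS.eq]
    simp
  have hTspec : spectrum ℝ T = ({c} : Set ℝ) - spectrum ℝ S := by
    rw [hTdef, spectrum.singleton_sub_eq]
    rw [Algebra.algebraMap_eq_smul_one]
  have hTpsd : T.PosSemidef := by
    apply hT.posSemidef_iff_eigenvalues_nonneg.mpr
    intro i
    have hmem := hT.eigenvalues_mem_spectrum_real i
    rw [hTspec] at hmem
    obtain ⟨a, ha, b, hb, hab⟩ := hmem
    rw [Set.mem_singleton_iff] at ha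
    subst ha
    rw [← hab]
    simpa using hc _ hb
  have h0 := hTpsd.dotProduct_mulVec_nonneg w
  simp only [star_trivial] at h0
  have heq : w ⬝ᵥ T *ᵥ w = c * (w ⬝ᵥ w) - w ⬝ᵥ S *ᵥ w := by
    simp [hTdef, Matrix.sub_mulVec, Matrix.smul_mulVec, dotProduct_sub, dotProduct_smul,
      smul_eq_mul]
  rw [heq] at h0
  linarith

/-- Quadratic form lower bound from a lower bound on the spectrum of a Hermitian matrix. -/
lemma quad_ge_of_spectrum (S : Matrix (Fin n) (Fin n) ℝ) (hS : S.IsHermitian) (c : ℝ)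
    (hc : ∀ μ ∈ spectrum ℝ S, c ≤ μ) (w : Fin n → ℝ) :
    c * (w ⬝ᵥ w) ≤ w ⬝ᵥ S *ᵥ w := by
  have hSneg : (-S).IsHermitian := hS.neg
  have hcneg : ∀ μ ∈ spectrum ℝ (-S), μ ≤ -c := by
    intro μ hμ
    rw [← spectrum.neg_eq, Set.mem_neg] at hμ
    have := hc _ hμ
    linarith
  have := quad_le_of_spectrum (-S) hSneg (-c) hcneg w
  rw [Matrix.neg_mulVec, dotProduct_neg] at this
  linarith

/-- Any element of the spectrum of a matrix with positive quadratic form is positive. -/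
lemma spectrum_pos_of_quadform (S : Matrix (Fin n) (Fin n) ℝ)
    (hpos : ∀ v : Fin n → ℝ, v ≠ 0 → 0 < v ⬝ᵥ S *ᵥ v) (μ : ℝ) (hμ : μ ∈ spectrum ℝ S) :
    0 < μ := by
  rw [spectrum.mem_iff] at hμ
  have hdet : (algebraMap ℝ (Matrix (Fin n) (Fin n) ℝ) μ - S).det = 0 := by
    by_contra h
    exact hμ ((Matrix.isUnit_iff_isUnit_det _).mpr (isUnit_iff_ne_zero.mpr h))
  obtain ⟨v, hv0, hv⟩ := (Matrix.exists_mulVec_eq_zero_iff).mpr hdet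
  have hSv : S *ᵥ v = μ • v := by
    have : (μ • (1 : Matrix (Fin n) (Fin n) ℝ) - S) *ᵥ v = 0 := by
      rwa [Algebra.algebraMap_eq_smul_one] at hv
    rw [Matrix.sub_mulVec, Matrix.smul_mulVec, Matrix.one_mulVec, sub_eq_zero] at this
    exact this.symm
  have h1 : 0 < v ⬝ᵥ S *ᵥ v := hpos v hv0
  have h2 : v ⬝ᵥ S *ᵥ v = μ * (v ⬝ᵥ v) := by rw [hSv, dotProduct_smul, smul_eq_mul]
  have h3 : 0 < v ⬝ᵥ v := by
    rcases (Function.ne_iff).mp hv0 with ⟨i, hi⟩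
    have hvi : (0:ℝ) < v i * v i := mul_self_pos.mpr (by simpa using hi)
    calc (0:ℝ) < v i * v i := hvi
      _ ≤ ∑ j, v j * v j :=
        Finset.single_le_sum (fun j _ => mul_self_nonneg (v j)) (Finset.mem_univ i)
      _ = v ⬝ᵥ v := rfl
  nlinarith

/-- derivative of `s ↦ exp (s • G) *ᵥ y`. -/
lemma hasDerivAt_exp_mulVec (G : Matrix (Fin n) (Fin n) ℝ) (y : Fin n → ℝ) (s : ℝ) :
    HasDerivAt (fun s : ℝ => exp (s • G) *ᵥ y) ((exp (s • G) * G) *ᵥ y) s := by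
  letI : SeminormedRing (Matrix (Fin n) (Fin n) ℝ) := Matrix.linftyOpSemiNormedRing
  letI : NormedRing (Matrix (Fin n) (Fin n) ℝ) := Matrix.linftyOpNormedRing
  letI : NormedAlgebra ℝ (Matrix (Fin n) (Fin n) ℝ) := Matrix.linftyOpNormedAlgebra
  have hE : HasDerivAt (fun u : ℝ => exp (u • G)) (exp (s • G) * G) s :=
    hasDerivAt_exp_smul_const G s
  let L : Matrix (Fin n) (Fin n) ℝ →ₗ[ℝ] (Fin n → ℝ) :=
    { toFun := fun M => M *ᵥ y
      map_add' := fun A B => Matrix.add_mulVec A B y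
      map_smul' := fun c A => by simp [Matrix.smul_mulVec] }
  have := (L.toContinuousLinearMap.hasFDerivAt (x := exp (s • G))).comp_hasDerivAt s hE
  exact this

/-- derivative of the quadratic form along a differentiable curve. -/
lemma hasDerivAt_quadform (P : Matrix (Fin n) (Fin n) ℝ) {z : ℝ → Fin n → ℝ}
    {z' : Fin n → ℝ} {s : ℝ} (hz : HasDerivAt z z' s) :
    HasDerivAt (fun s => z s ⬝ᵥ P *ᵥ z s) (z' ⬝ᵥ P *ᵥ z s + z s ⬝ᵥ P *ᵥ z') s := by
  have hzi : ∀ i, HasDerivAt (fun s => z s i) (z' i) s := fun i =>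
    (ContinuousLinearMap.proj (R := ℝ) (φ := fun _ : Fin n => ℝ) i).hasFDerivAt.comp_hasDerivAt s hz
  have key : HasDerivAt (fun s => ∑ i, z s i * ∑ j, P i j * z s j)
      (∑ i, (z' i * ∑ j, P i j * z s j + z s i * ∑ j, P i j * z' j)) s := by
    apply HasDerivAt.fun_sum
    intro i _
    exact (hzi i).mul (HasDerivAt.fun_sum fun j _ => (hzi j).const_mul (P i j))
  have e1 : (fun s => ∑ i, z s i * ∑ j, P i j * z s j) = fun s => z s ⬝ᵥ P *ᵥ z s := by
    funext s; simp [dotProduct, Matrix.mulVec]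
  rw [e1] at key
  convert key using 1
  simp [dotProduct, Matrix.mulVec, Finset.sum_add_distrib]

/-- derivative of `f s = (exp (s•G) *ᵥ y) ⬝ᵥ P *ᵥ (exp (s•G) *ᵥ y)`. -/
lemma hasDerivAt_expquad (P G : Matrix (Fin n) (Fin n) ℝ) (y : Fin n → ℝ) (s : ℝ) :
    HasDerivAt (fun s : ℝ => (exp (s • G) *ᵥ y) ⬝ᵥ P *ᵥ (exp (s • G) *ᵥ y))
      ((exp (s • G) *ᵥ y) ⬝ᵥ (P * G + Gᵀ * P) *ᵥ (exp (s • G) *ᵥ y)) s := by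
  have hz := hasDerivAt_exp_mulVec G y s
  have key := hasDerivAt_quadform P hz
  have hcomm : exp (s • G) * G = G * exp (s • G) :=
    (((Commute.refl G).smul_right s).exp_right).eq.symm
  set z := exp (s • G) *ᵥ y with hzdef
  have hz' : (exp (s • G) * G) *ᵥ y = G *ᵥ z := by
    rw [hcomm, hzdef, ← Matrix.mulVec_mulVec]
  rw [hz'] at key
  convert key using 1
  have h1 : (G *ᵥ z) ⬝ᵥ P *ᵥ z = z ⬝ᵥ (Gᵀ * P) *ᵥ z := by
    rw [← Matrix.vecMul_transpose, Matrix.dotProduct_mulVec, Matrix.vecMul_vecMul,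
      ← Matrix.dotProduct_mulVec]
  have h2 : z ⬝ᵥ P *ᵥ (G *ᵥ z) = z ⬝ᵥ (P * G) *ᵥ z := by
    rw [Matrix.mulVec_mulVec]
  rw [Matrix.add_mulVec, dotProduct_add, h1, h2]
  ring

/-- If the quadratic form of `P*G + Gᵀ*P` is bounded above by `c` times that of `P`, the
rescaled energy is antitone. -/
lemma energy_antitone (P G : Matrix (Fin n) (Fin n) ℝ) (c : ℝ) (y : Fin n → ℝ)
    (hq : ∀ v : Fin n → ℝ, v ⬝ᵥ (P * G + Gᵀ * P) *ᵥ v ≤ c * (v ⬝ᵥ P *ᵥ v)) :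
    Antitone (fun s : ℝ =>
      ((exp (s • G) *ᵥ y) ⬝ᵥ P *ᵥ (exp (s • G) *ᵥ y)) * Real.exp (-(c * s))) := by
  have hg : ∀ s : ℝ, HasDerivAt (fun s : ℝ =>
      ((exp (s • G) *ᵥ y) ⬝ᵥ P *ᵥ (exp (s • G) *ᵥ y)) * Real.exp (-(c * s)))
      (((exp (s • G) *ᵥ y) ⬝ᵥ (P * G + Gᵀ * P) *ᵥ (exp (s • G) *ᵥ y)) * Real.exp (-(c * s)) +
        ((exp (s • G) *ᵥ y) ⬝ᵥ P *ᵥ (exp (s • G) *ᵥ y)) * (Real.exp (-(c * s)) * (-c))) s := by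
    intro s
    have h1 := hasDerivAt_expquad P G y s
    have h2 : HasDerivAt (fun s : ℝ => Real.exp (-(c * s))) (Real.exp (-(c * s)) * (-c)) s := by
      have : HasDerivAt (fun s : ℝ => -(c * s)) (-c) s := by
        simpa using ((hasDerivAt_id s).const_mul c).fun_neg
      exact this.exp
    exact h1.mul h2
  apply antitone_of_deriv_nonpos
  · exact fun s => (hg s).differentiableAt
  · intro s
    rw [(hg s).deriv]
    have hb := hq (exp (s • G) *ᵥ y)
    have he : (0:ℝ) < Real.exp (-(c * s)) := Real.exp_pos _
    nlinarith [he.le]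

/-- If the quadratic form of `P*G + Gᵀ*P` is bounded below by `c` times that of `P`, the
rescaled energy is monotone. -/
lemma energy_monotone (P G : Matrix (Fin n) (Fin n) ℝ) (c : ℝ) (y : Fin n → ℝ)
    (hq : ∀ v : Fin n → ℝ, c * (v ⬝ᵥ P *ᵥ v) ≤ v ⬝ᵥ (P * G + Gᵀ * P) *ᵥ v) :
    Monotone (fun s : ℝ =>
      ((exp (s • G) *ᵥ y) ⬝ᵥ P *ᵥ (exp (s • G) *ᵥ y)) * Real.exp (-(c * s))) := by
  have hg : ∀ s : ℝ, HasDerivAt (fun s : ℝ =>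
      ((exp (s • G) *ᵥ y) ⬝ᵥ P *ᵥ (exp (s • G) *ᵥ y)) * Real.exp (-(c * s)))
      (((exp (s • G) *ᵥ y) ⬝ᵥ (P * G + Gᵀ * P) *ᵥ (exp (s • G) *ᵥ y)) * Real.exp (-(c * s)) +
        ((exp (s • G) *ᵥ y) ⬝ᵥ P *ᵥ (exp (s • G) *ᵥ y)) * (Real.exp (-(c * s)) * (-c))) s := by
    intro s
    have h1 := hasDerivAt_expquad P G y s
    have h2 : HasDerivAt (fun s : ℝ => Real.exp (-(c * s))) (Real.exp (-(c * s)) * (-c)) s := by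
      have : HasDerivAt (fun s : ℝ => -(c * s)) (-c) s := by
        simpa using ((hasDerivAt_id s).const_mul c).fun_neg
      exact this.exp
    exact h1.mul h2
  apply monotone_of_deriv_nonneg
  · exact fun s => (hg s).differentiableAt
  · intro s
    rw [(hg s).deriv]
    have hb := hq (exp (s • G) *ᵥ y)
    have he : (0:ℝ) < Real.exp (-(c * s)) := Real.exp_pos _
    nlinarith [he.le]

lemma mul_exp_neg_le' {u v t : ℝ} (h : u * Real.exp (-t) ≤ v) : u ≤ v * Real.exp t := by
  have h2 := mul_le_mul_of_nonneg_right h (Real.exp_pos t).le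
  rwa [mul_assoc, ← Real.exp_add, neg_add_cancel, Real.exp_zero, mul_one] at h2

lemma le_mul_exp_neg' {u v t : ℝ} (h : v ≤ u * Real.exp (-t)) : v * Real.exp t ≤ u := by
  have h2 := mul_le_mul_of_nonneg_right h (Real.exp_pos t).le
  rwa [mul_assoc, ← Real.exp_add, neg_add_cancel, Real.exp_zero, mul_one] at h2

end Aux

/-- relation between the canonical homogeneous norm and the weighted norm:
`‖x‖_d^η̲ ≤ ‖x‖ ≤ ‖x‖_d^η̄` when `‖x‖ ≥ 1`, and `‖x‖_d^η̄ ≤ ‖x‖ ≤ ‖x‖_d^η̲` when `‖x‖ ≤ 1`. -/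
theorem stmt6 {n : ℕ} (P G : Matrix (Fin n) (Fin n) ℝ) (hP : P.PosDef)
    (hmon : (P * G + Gᵀ * P).PosDef) (η₁ η₂ : ℝ)
    (hmax : IsGreatest (spectrum ℝ
      (hP.posSemidef.sqrt * G * (hP.posSemidef.sqrt)⁻¹ +
        (hP.posSemidef.sqrt)⁻¹ * Gᵀ * hP.posSemidef.sqrt)) (2 * η₂))
    (hmin : IsLeast (spectrum ℝ
      (hP.posSemidef.sqrt * G * (hP.posSemidef.sqrt)⁻¹ +
        (hP.posSemidef.sqrt)⁻¹ * Gᵀ * hP.posSemidef.sqrt)) (2 * η₁))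
    (hnd : (Fin n → ℝ) → ℝ) (hnd0 : hnd 0 = 0)
    (hndpos : ∀ x : Fin n → ℝ, x ≠ 0 → 0 < hnd x)
    (hnddef : ∀ x : Fin n → ℝ, x ≠ 0 → wnorm P (dil G (-(Real.log (hnd x))) *ᵥ x) = 1) :
    ∀ x : Fin n → ℝ,
      (1 ≤ wnorm P x → hnd x ^ η₁ ≤ wnorm P x ∧ wnorm P x ≤ hnd x ^ η₂) ∧
      (wnorm P x ≤ 1 → hnd x ^ η₂ ≤ wnorm P x ∧ wnorm P x ≤ hnd x ^ η₁) := by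
  classical
  set Q := hP.posSemidef.sqrt with hQdef
  set M := P * G + Gᵀ * P with hMdef
  set S := Q * G * Q⁻¹ + Q⁻¹ * Gᵀ * Q with hSdef
  have hQQ : Q * Q = P := psd_sqrt_mul_self' hP.posSemidef
  have hQH : Qᵀ = Q := by
    have h := psd_sqrt_isHermitian' hP.posSemidef
    rwa [Matrix.IsHermitian, Matrix.conjTranspose_eq_transpose_of_trivial] at h
  have hdetQ : Q.det ≠ 0 := by
    intro h
    have := hP.det_pos
    rw [← hQQ, Matrix.det_mul, h, mul_zero] at this
    exact lt_irrefl _ this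
  have hQl : Q⁻¹ * Q = 1 := Matrix.nonsing_inv_mul Q (isUnit_iff_ne_zero.mpr hdetQ)
  have hQr : Q * Q⁻¹ = 1 := Matrix.mul_nonsing_inv Q (isUnit_iff_ne_zero.mpr hdetQ)
  have hQiT : Q⁻¹ᵀ = Q⁻¹ := by rw [Matrix.transpose_nonsing_inv, hQH]
  have hSeq : S = Q⁻¹ * M * Q⁻¹ := by
    rw [hSdef, hMdef, ← hQQ]
    simp only [Matrix.mul_add, Matrix.add_mul, ← mul_assoc]
    rw [hQl, one_mul, mul_assoc (Q⁻¹ * Gᵀ * Q) Q Q⁻¹, hQr, mul_one]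
  have hQv : ∀ v : Fin n → ℝ, Q *ᵥ v = v ᵥ* Q := by
    intro v
    rw [← Matrix.vecMul_transpose, hQH]
  have transfer1 : ∀ v : Fin n → ℝ, (Q *ᵥ v) ⬝ᵥ (Q *ᵥ v) = v ⬝ᵥ P *ᵥ v := by
    intro v
    nth_rewrite 1 [hQv v]
    rw [← Matrix.dotProduct_mulVec, Matrix.mulVec_mulVec, hQQ]
  have transfer2 : ∀ v : Fin n → ℝ, (Q *ᵥ v) ⬝ᵥ S *ᵥ (Q *ᵥ v) = v ⬝ᵥ M *ᵥ v := by
    intro v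
    rw [hSeq, Matrix.mulVec_mulVec]
    have e : Q⁻¹ * M * Q⁻¹ * Q = Q⁻¹ * M := by
      rw [mul_assoc, hQl, mul_one]
    rw [e]
    nth_rewrite 1 [hQv v]
    rw [← Matrix.dotProduct_mulVec, Matrix.mulVec_mulVec, ← mul_assoc, hQr, one_mul]
  have hSH : S.IsHermitian := by
    rw [Matrix.IsHermitian, Matrix.conjTranspose_eq_transpose_of_trivial, hSdef]
    simp only [Matrix.transpose_add, Matrix.transpose_mul, hQH, hQiT,
      Matrix.transpose_transpose]
    rw [add_comm]
    simp only [mul_assoc]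
  have hSpos : ∀ v : Fin n → ℝ, v ≠ 0 → 0 < v ⬝ᵥ S *ᵥ v := by
    intro v hv
    have hu : Q *ᵥ (Q⁻¹ *ᵥ v) = v := by
      rw [Matrix.mulVec_mulVec, hQr, Matrix.one_mulVec]
    have hune : Q⁻¹ *ᵥ v ≠ 0 := by
      intro h0
      apply hv
      rw [← hu, h0, Matrix.mulVec_zero]
    have ht := transfer2 (Q⁻¹ *ᵥ v)
    rw [hu] at ht
    rw [ht]
    simpa using hmon.dotProduct_mulVec_pos hune
  have hη₁pos : 0 < η₁ := by
    have := spectrum_pos_of_quadform S hSpos _ hmin.1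
    linarith
  have hη₂pos : 0 < η₂ := by
    have := spectrum_pos_of_quadform S hSpos _ hmax.1
    linarith
  have hq_up : ∀ v : Fin n → ℝ, v ⬝ᵥ M *ᵥ v ≤ (2 * η₂) * (v ⬝ᵥ P *ᵥ v) := by
    intro v
    have h1 := quad_le_of_spectrum S hSH (2 * η₂) (fun μ hμ => hmax.2 hμ) (Q *ᵥ v)
    rwa [transfer1 v, transfer2 v] at h1
  have hq_lo : ∀ v : Fin n → ℝ, (2 * η₁) * (v ⬝ᵥ P *ᵥ v) ≤ v ⬝ᵥ M *ᵥ v := by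
    intro v
    have h1 := quad_ge_of_spectrum S hSH (2 * η₁) (fun μ hμ => hmin.2 hμ) (Q *ᵥ v)
    rwa [transfer1 v, transfer2 v] at h1
  -- main estimate for nonzero x
  have main : ∀ x : Fin n → ℝ, x ≠ 0 → ∀ h : ℝ, 0 < h →
      wnorm P (exp ((-(Real.log h)) • G) *ᵥ x) = 1 →
      (1 ≤ h → h ^ η₁ ≤ wnorm P x ∧ wnorm P x ≤ h ^ η₂) ∧
      (h ≤ 1 → h ^ η₂ ≤ wnorm P x ∧ wnorm P x ≤ h ^ η₁) := by
    intro x hx h hh hunit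
    set s₀ := Real.log h with hs₀
    set y : Fin n → ℝ := exp ((-s₀) • G) *ᵥ x with hy
    set f : ℝ → ℝ := fun s => (exp (s • G) *ᵥ y) ⬝ᵥ P *ᵥ (exp (s • G) *ᵥ y) with hfdef
    have hy1 : y ⬝ᵥ P *ᵥ y = 1 := by
      have h1 : Real.sqrt (y ⬝ᵥ P *ᵥ y) = 1 := hunit
      have h2 : 0 ≤ y ⬝ᵥ P *ᵥ y := by simpa using hP.posSemidef.dotProduct_mulVec_nonneg y
      nlinarith [Real.sq_sqrt h2, h1]
    have hf0 : f 0 = 1 := by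
      rw [hfdef]
      simp only [zero_smul, exp_zero, Matrix.one_mulVec]
      exact hy1
    have hfs : f s₀ = x ⬝ᵥ P *ᵥ x := by
      have hEy : exp (s₀ • G) *ᵥ y = x := by
        rw [hy, Matrix.mulVec_mulVec]
        have hc : Commute (s₀ • G) ((-s₀) • G) :=
          ((Commute.refl G).smul_right (-s₀)).smul_left s₀
        rw [← Matrix.exp_add_of_commute _ _ hc]
        have : s₀ • G + (-s₀) • G = 0 := by
          rw [← add_smul]
          simp
        rw [this, exp_zero, Matrix.one_mulVec]
      rw [hfdef]
      simp only [hEy]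
    have hwx : wnorm P x = Real.sqrt (f s₀) := by rw [hfs]; rfl
    have hfpos : 0 < f s₀ := by
      rw [hfs]
      simpa using hP.dotProduct_mulVec_pos hx
    have hanti := energy_antitone P G (2 * η₂) y hq_up
    have hmono := energy_monotone P G (2 * η₁) y hq_lo
    have hrpow : ∀ c : ℝ, Real.exp (c * s₀) = h ^ c := by
      intro c
      rw [Real.rpow_def_of_pos hh, mul_comm]
    have hsqrt : ∀ c : ℝ, Real.sqrt (h ^ (2 * c)) = h ^ c := by
      intro c
      rw [show (2:ℝ) * c = c + c by ring, Real.rpow_add hh,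
        Real.sqrt_mul_self (Real.rpow_nonneg hh.le c)]
    have claimA : 1 ≤ h → h ^ η₁ ≤ wnorm P x ∧ wnorm P x ≤ h ^ η₂ := by
      intro h1h
      have hs : (0:ℝ) ≤ s₀ := Real.log_nonneg h1h
      have hup : f s₀ ≤ h ^ (2 * η₂) := by
        have hA : f s₀ * Real.exp (-(2 * η₂ * s₀)) ≤ f 0 * Real.exp (-(2 * η₂ * 0)) := hanti hs
        simp only [hf0, mul_zero, neg_zero, Real.exp_zero, mul_one, one_mul] at hA
        have h2 := mul_exp_neg_le' hA
        rwa [one_mul, hrpow (2 * η₂)] at h2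
      have hlo : h ^ (2 * η₁) ≤ f s₀ := by
        have hA : f 0 * Real.exp (-(2 * η₁ * 0)) ≤ f s₀ * Real.exp (-(2 * η₁ * s₀)) := hmono hs
        simp only [hf0, mul_zero, neg_zero, Real.exp_zero, mul_one, one_mul] at hA
        have h2 := le_mul_exp_neg' hA
        rwa [one_mul, hrpow (2 * η₁)] at h2
      constructor
      · rw [hwx, ← hsqrt η₁]
        exact Real.sqrt_le_sqrt hlo
      · rw [hwx, ← hsqrt η₂]
        exact Real.sqrt_le_sqrt hup
    have claimB : h ≤ 1 → h ^ η₂ ≤ wnorm P x ∧ wnorm P x ≤ h ^ η₁ := by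
      intro h1h
      have hs : s₀ ≤ 0 := Real.log_nonpos hh.le h1h
      have hup : f s₀ ≤ h ^ (2 * η₁) := by
        have hA : f s₀ * Real.exp (-(2 * η₁ * s₀)) ≤ f 0 * Real.exp (-(2 * η₁ * 0)) := hmono hs
        simp only [hf0, mul_zero, neg_zero, Real.exp_zero, mul_one, one_mul] at hA
        have h2 := mul_exp_neg_le' hA
        rwa [one_mul, hrpow (2 * η₁)] at h2
      have hlo : h ^ (2 * η₂) ≤ f s₀ := by
        have hA : f 0 * Real.exp (-(2 * η₂ * 0)) ≤ f s₀ * Real.exp (-(2 * η₂ * s₀)) := hanti hs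
        simp only [hf0, mul_zero, neg_zero, Real.exp_zero, mul_one, one_mul] at hA
        have h2 := le_mul_exp_neg' hA
        rwa [one_mul, hrpow (2 * η₂)] at h2
      constructor
      · rw [hwx, ← hsqrt η₂]
        exact Real.sqrt_le_sqrt hlo
      · rw [hwx, ← hsqrt η₁]
        exact Real.sqrt_le_sqrt hup
    exact ⟨claimA, claimB⟩
  -- assemble
  intro x
  by_cases hx : x = 0
  · subst hx
    have hW0 : wnorm P (0 : Fin n → ℝ) = 0 := by simp [wnorm]
    constructor
    · intro habs
      rw [hW0] at habs
      norm_num at habs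
    · intro _
      rw [hnd0, hW0, Real.zero_rpow (ne_of_gt hη₂pos), Real.zero_rpow (ne_of_gt hη₁pos)]
      exact ⟨le_refl 0, le_refl 0⟩
  · have hh := hndpos x hx
    have hunit : wnorm P (exp ((-(Real.log (hnd x))) • G) *ᵥ x) = 1 := hnddef x hx
    obtain ⟨claimA, claimB⟩ := main x hx (hnd x) hh hunit
    have hWnn : 0 ≤ wnorm P x := Real.sqrt_nonneg _
    constructor
    · intro hW
      rcases le_total 1 (hnd x) with hc | hc
      · exact claimA hc
      · obtain ⟨hbl, hbu⟩ := claimB hc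
        have h1 : hnd x ^ η₁ ≤ 1 := Real.rpow_le_one hh.le hc hη₁pos.le
        have hW1 : wnorm P x = 1 := le_antisymm (hbu.trans h1) hW
        have hh1 : hnd x = 1 := by
          by_contra hne
          have hlt : hnd x < 1 := lt_of_le_of_ne hc hne
          have := Real.rpow_lt_one hh.le hlt hη₁pos
          linarith [hW.trans hbu]
        rw [hW1, hh1, Real.one_rpow, Real.one_rpow]
        exact ⟨le_refl 1, le_refl 1⟩
      
    · intro hW
      rcases le_total (hnd x) 1 with hc | hc
      · exact claimB hc
      · obtain ⟨hbl, hbu⟩ := claimA hc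
        have h1 : 1 ≤ hnd x ^ η₁ := Real.one_le_rpow hc hη₁pos.le
        have hW1 : wnorm P x = 1 := le_antisymm hW (h1.trans hbl)
        have hh1 : hnd x = 1 := by
          by_contra hne
          have hlt : 1 < hnd x := lt_of_le_of_ne hc (Ne.symm hne)
          have := Real.one_lt_rpow_iff_of_pos hh |>.mpr (Or.inl ⟨hlt, hη₁pos⟩)
          linarith [hbl.trans hW]
        rw [hW1, hh1, Real.one_rpow, Real.one_rpow]
        exact ⟨le_refl 1, le_refl 1⟩
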